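/- Assume that no family of fewer than 𝔠 meager subsets of ℝ covers ℝ (i.e., cov(ℳ) = 𝔠). Let 𝒦 be a family of compact zero-dimensional (equivalently, compact totally disconnected) subsets of [0,1]^ℕ with |𝒦| < 𝔠. Then the union ⋃𝒦, endowed with the subspace topology, is zero-dimensional, i.e., its topology has a base consisting of clopen sets. -/

import Mathlib

open Cardinal

namespace Stmt13

open Set TopologicalSpace

abbrev Hc := ℕ → unitInterval

/-- binary digit `k` of `t` (of its fractional part). -/
noncomputable def dg (t : ℝ) (k : ℕ) : Bool := decide ((⌊t * 2 ^ (k + 1)⌋ % 2 : ℤ) = 1)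

/-- length of the run of 1-digits immediately below position `k`. -/
noncomputable def run (t : ℝ) (k : ℕ) : ℕ :=
  Nat.rec 0 (fun k ih => if dg t k then ih + 1 else 0) k

@[simp] lemma run_zero (t : ℝ) : run t 0 = 0 := rfl

lemma run_succ (t : ℝ) (k : ℕ) : run t (k + 1) = if dg t k then run t k + 1 else 0 := rfl

lemma run_le (t : ℝ) : ∀ k, run t k ≤ k
  | 0 => le_refl _
  | k + 1 => by
      rw [run_succ]
      split
      · exact Nat.succ_le_succ (run_le t k)
      · exact Nat.zero_le _

lemma floor_dyadic {m : ℤ} {N : ℕ} {t : ℝ} (h1 : (m : ℝ) / 2 ^ N ≤ t)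
    (h2 : t < (m + 1 : ℝ) / 2 ^ N) {k : ℕ} (hk : k + 1 ≤ N) :
    ⌊t * 2 ^ (k + 1)⌋ = m / 2 ^ (N - (k + 1)) := by
  set j : ℕ := N - (k + 1) with hj
  have hN : N = j + (k + 1) := by omega
  set q : ℤ := m / 2 ^ j with hq
  have h2j : (0:ℤ) < 2 ^ j := by positivity
  have hql : q * 2 ^ j ≤ m := Int.ediv_mul_le m (by positivity)
  have hqu : m < (q + 1) * 2 ^ j := Int.lt_ediv_add_one_mul_self m h2j
  have hpow : (2:ℝ) ^ N = 2 ^ j * 2 ^ (k + 1) := by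
    rw [hN, pow_add]
  have hb : (0:ℝ) < 2 ^ (k+1) := by positivity
  have hb2 : (0:ℝ) < 2 ^ j := by positivity
  rw [Int.floor_eq_iff]
  constructor
  · -- (q:ℝ) ≤ t * 2^(k+1)
    have : (q:ℝ) * 2 ^ j ≤ m := by exact_mod_cast hql
    have h1' : (m:ℝ) ≤ t * 2 ^ N := by
      rw [div_le_iff₀ (by positivity)] at h1; linarith
    have := this.trans h1'
    rw [hpow] at this
    nlinarith
  · -- t * 2^(k+1) < q + 1
    have : (m:ℝ) + 1 ≤ ((q:ℝ) + 1) * 2 ^ j := by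
      have : (m:ℝ) < ((q:ℝ) + 1) * 2 ^ j := by exact_mod_cast hqu
      have hint : (m:ℝ) + 1 ≤ ((q + 1) * 2 ^ j : ℤ) := by
        exact_mod_cast Int.add_one_le_iff.mpr hqu
      push_cast at hint ⊢; linarith
    have h2' : t * 2 ^ N < (m:ℝ) + 1 := by
      rw [lt_div_iff₀ (by positivity)] at h2; linarith
    rw [hpow] at h2'
    nlinarith

lemma dg_dyadic_eq {m : ℤ} {N : ℕ} {t t' : ℝ}
    (h1 : (m : ℝ) / 2 ^ N ≤ t) (h2 : t < (m + 1 : ℝ) / 2 ^ N)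
    (h1' : (m : ℝ) / 2 ^ N ≤ t') (h2' : t' < (m + 1 : ℝ) / 2 ^ N)
    {k : ℕ} (hk : k < N) : dg t k = dg t' k := by
  unfold dg
  rw [floor_dyadic h1 h2 hk, floor_dyadic h1' h2' hk]

lemma run_dyadic_eq {m : ℤ} {N : ℕ} {t t' : ℝ}
    (h1 : (m : ℝ) / 2 ^ N ≤ t) (h2 : t < (m + 1 : ℝ) / 2 ^ N)
    (h1' : (m : ℝ) / 2 ^ N ≤ t') (h2' : t' < (m + 1 : ℝ) / 2 ^ N)
    {k : ℕ} (hk : k ≤ N) : run t k = run t' k := by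
  induction k with
  | zero => rfl
  | succ k ih =>
      rw [run_succ, run_succ, dg_dyadic_eq h1 h2 h1' h2' (show k < N by omega), ih (by omega)]


/-! ### The coded perturbation series -/

noncomputable def coeff (q : ℕ → C(Hc, ℝ)) (t : ℝ) (k : ℕ) : Hc → ℝ :=
  fun x => if dg t k then 0 else ((2:ℝ)⁻¹) ^ (k - run t k) * q (Nat.unpair (run t k)).1 x

noncomputable def wt (t : ℝ) (k : ℕ) : ℝ := if dg t k then 0 else ((2:ℝ)⁻¹) ^ (k - run t k)

lemma wt_nonneg (t : ℝ) (k : ℕ) : 0 ≤ wt t k := by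
  unfold wt; split
  · exact le_refl _
  · positivity

lemma abs_coeff_le {q : ℕ → C(Hc, ℝ)} (hq : ∀ j x, |q j x| ≤ 1) (t : ℝ) (k : ℕ) (x : Hc) :
    |coeff q t k x| ≤ wt t k := by
  unfold coeff wt; split
  · simp
  · rw [abs_mul, abs_pow]
    calc |(2:ℝ)⁻¹| ^ (k - run t k) * |q (Nat.unpair (run t k)).1 x|
        ≤ |(2:ℝ)⁻¹| ^ (k - run t k) * 1 := by
          exact mul_le_mul_of_nonneg_left (hq _ _) (by positivity)
      _ = ((2:ℝ)⁻¹) ^ (k - run t k) := by rw [mul_one, abs_of_nonneg]; norm_num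

lemma continuous_coeff (q : ℕ → C(Hc, ℝ)) (t : ℝ) (k : ℕ) : Continuous (coeff q t k) := by
  unfold coeff; split
  · exact continuous_const
  · exact continuous_const.mul (q _).continuous

lemma sum_wt_block (t : ℝ) (n : ℕ) : ∀ M : ℕ,
    ∑ k ∈ Finset.range M, wt t (n + k) ≤
      2 * ((2:ℝ)⁻¹) ^ (n - run t n) - 2 * ((2:ℝ)⁻¹) ^ ((n + M) - run t (n + M))
  | 0 => by simp
  | M + 1 => by
      rw [Finset.sum_range_succ]
      have IH := sum_wt_block t n M
      have hwt : wt t (n + M) ≤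
          2 * ((2:ℝ)⁻¹) ^ ((n + M) - run t (n + M)) -
            2 * ((2:ℝ)⁻¹) ^ ((n + (M+1)) - run t (n + (M+1))) := by
        by_cases hdg : dg t (n + M) = true
        · -- digit 1 : run increments, exponent unchanged
          have h0 : wt t (n + M) = 0 := by unfold wt; rw [if_pos hdg]
          have hr : run t (n + M + 1) = run t (n + M) + 1 := by rw [run_succ, if_pos hdg]
          have he : (n + (M+1)) - run t (n + (M+1)) = (n + M) - run t (n + M) := by
            have := run_le t (n + M)
            rw [show n + (M + 1) = n + M + 1 from rfl, hr]
            omega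
          rw [h0, he]
          simp
        · -- digit 0 : run resets
          have h0 : wt t (n + M) = ((2:ℝ)⁻¹) ^ ((n + M) - run t (n + M)) := by
            unfold wt; rw [if_neg hdg]
          have hr : run t (n + M + 1) = 0 := by rw [run_succ, if_neg hdg]
          rw [h0, show n + (M + 1) = n + M + 1 from rfl, hr, Nat.sub_zero]
          have h1 : ((2:ℝ)⁻¹) ^ (n + M + 1) = ((2:ℝ)⁻¹) ^ (n + M) * 2⁻¹ := by ring
          have h2 : ((2:ℝ)⁻¹ : ℝ) ^ (n + M) ≤ ((2:ℝ)⁻¹) ^ ((n + M) - run t (n + M)) := by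
            apply pow_le_pow_of_le_one (by norm_num) (by norm_num)
            omega
          nlinarith [pow_nonneg (by norm_num : (0:ℝ) ≤ 2⁻¹) (n + M)]
      linarith

lemma summable_wt (t : ℝ) : Summable (wt t) := by
  apply summable_of_sum_range_le (c := 2) (wt_nonneg t)
  intro n
  have := sum_wt_block t 0 n
  simp only [Nat.zero_add, run_zero, Nat.sub_zero, pow_zero, mul_one, zero_add] at this
  nlinarith [pow_nonneg (by norm_num : (0:ℝ) ≤ 2⁻¹) (n - run t n)]

lemma summable_wt_shift (t : ℝ) (n : ℕ) : Summable (fun k => wt t (n + k)) := by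
  have := (summable_nat_add_iff n).mpr (summable_wt t)
  simpa [add_comm] using this

lemma tsum_wt_tail_le (t : ℝ) (n : ℕ) :
    ∑' k, wt t (n + k) ≤ 2 * ((2:ℝ)⁻¹) ^ (n - run t n) := by
  apply Summable.tsum_le_of_sum_range_le (summable_wt_shift t n)
  intro M
  have := sum_wt_block t n M
  nlinarith [pow_nonneg (by norm_num : (0:ℝ) ≤ 2⁻¹) ((n + M) - run t (n + M))]

lemma tsum_wt_le_two (t : ℝ) : ∑' k, wt t k ≤ 2 := by
  have := tsum_wt_tail_le t 0
  simpa using this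

lemma summable_coeff {q : ℕ → C(Hc, ℝ)} (hq : ∀ j x, |q j x| ≤ 1) (t : ℝ) (x : Hc) :
    Summable (fun k => coeff q t k x) := by
  apply Summable.of_abs
  exact Summable.of_nonneg_of_le (fun k => abs_nonneg _) (fun k => abs_coeff_le hq t k x)
    (summable_wt t)

lemma summable_coeff_shift {q : ℕ → C(Hc, ℝ)} (hq : ∀ j x, |q j x| ≤ 1) (t : ℝ) (x : Hc)
    (n : ℕ) : Summable (fun k => coeff q t (n + k) x) := by
  have := (summable_nat_add_iff n).mpr (summable_coeff hq t x)
  simpa [add_comm] using this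

lemma abs_tsum_coeff_tail_le {q : ℕ → C(Hc, ℝ)} (hq : ∀ j x, |q j x| ≤ 1) (t : ℝ) (x : Hc)
    (n : ℕ) : |∑' k, coeff q t (n + k) x| ≤ 2 * ((2:ℝ)⁻¹) ^ (n - run t n) := by
  calc |∑' k, coeff q t (n + k) x| ≤ ∑' k, |coeff q t (n + k) x| := by
        simpa [Real.norm_eq_abs] using
          norm_tsum_le_tsum_norm (f := fun k => coeff q t (n + k) x)
            (by simpa [Real.norm_eq_abs] using (summable_coeff_shift hq t x n).abs)
    _ ≤ ∑' k, wt t (n + k) := by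
        apply Summable.tsum_le_tsum (fun k => abs_coeff_le hq t _ x)
          ((summable_coeff_shift hq t x n).abs) (summable_wt_shift t n)
    _ ≤ 2 * ((2:ℝ)⁻¹) ^ (n - run t n) := tsum_wt_tail_le t n

lemma abs_tsum_coeff_le_two {q : ℕ → C(Hc, ℝ)} (hq : ∀ j x, |q j x| ≤ 1) (t : ℝ) (x : Hc) :
    |∑' k, coeff q t k x| ≤ 2 := by
  have := abs_tsum_coeff_tail_le hq t x 0
  simpa using this

/-! ### The function `Phi` -/

noncomputable def Phi (u : C(Hc, ℝ)) (q : ℕ → C(Hc, ℝ)) (t : ℝ) : Hc → ℝ :=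
  fun x => u x + 8⁻¹ * ∑' k, coeff q t k x

lemma continuous_Phi (u : C(Hc, ℝ)) {q : ℕ → C(Hc, ℝ)} (hq : ∀ j x, |q j x| ≤ 1) (t : ℝ) :
    Continuous (Phi u q t) := by
  apply u.continuous.add
  apply continuous_const.mul
  apply continuous_tsum (continuous_coeff q t) (summable_wt t)
  intro n x
  rw [Real.norm_eq_abs]
  exact abs_coeff_le hq t n x

lemma Phi_lt_half {u : C(Hc, ℝ)} {q : ℕ → C(Hc, ℝ)} (hq : ∀ j x, |q j x| ≤ 1) (t : ℝ)
    {x : Hc} (hx : u x = 0) : Phi u q t x < 1/2 := by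
  have := abs_tsum_coeff_le_two hq t x
  unfold Phi; rw [hx]
  rw [abs_le] at this
  linarith

lemma Phi_gt_half {u : C(Hc, ℝ)} {q : ℕ → C(Hc, ℝ)} (hq : ∀ j x, |q j x| ≤ 1) (t : ℝ)
    {x : Hc} (hx : u x = 1) : 1/2 < Phi u q t x := by
  have := abs_tsum_coeff_le_two hq t x
  unfold Phi; rw [hx]
  rw [abs_le] at this
  linarith


/-! ### Perturbation lemma on a compact totally disconnected set -/

lemma min_max_clamp_abs_le (a : ℝ) : |max (-1) (min 1 a)| ≤ 1 := by
  rw [abs_le]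
  refine ⟨le_max_left _ _, max_le (by norm_num) (min_le_left _ _)⟩

lemma clamp_lipschitz (a b : ℝ) :
    |max (-1) (min 1 a) - max (-1) (min 1 b)| ≤ |a - b| := by
  calc |max (-1) (min 1 a) - max (-1) (min 1 b)|
      = |max (min 1 a) (-1) - max (min 1 b) (-1)| := by rw [max_comm (-1), max_comm (-1)]
    _ ≤ |min 1 a - min 1 b| := abs_max_sub_max_le_abs _ _ _
    _ = |min a 1 - min b 1| := by rw [min_comm 1, min_comm 1]
    _ ≤ max |a - b| |1 - 1| := abs_min_sub_min_le_max _ _ _ _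
    _ = |a - b| := by simp

lemma clamp_eq_self {a : ℝ} (ha : |a| ≤ 1) : max (-1) (min 1 a) = a := by
  rw [abs_le] at ha
  rw [min_eq_right ha.2, max_eq_right ha.1]

lemma perturb {K : Set Hc} (hKc : IsCompact K) (hKt : IsTotallyDisconnected K)
    {s : Hc → ℝ} (hs : Continuous s) {δ : ℝ} (hδ : 0 < δ) :
    ∃ h : C(Hc, ℝ), (∀ x, |h x| ≤ 1) ∧ ∀ x ∈ K, δ / 2 ≤ |s x + δ * h x - 1 / 2| := by
  classical
  haveI : CompactSpace ↥K := isCompact_iff_compactSpace.mp hKc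
  haveI : TotallyDisconnectedSpace ↥K := totallyDisconnectedSpace_subtype_iff.mpr hKt
  set Cc : Set ↥K := {y | s y.1 ≤ 1 / 2} with hCc
  have hCcClosed : IsClosed Cc := isClosed_le (hs.comp continuous_subtype_val) continuous_const
  have hCcCompact : IsCompact Cc := hCcClosed.isCompact
  set U : Set ↥K := {y | s y.1 < 1 / 2 + δ / 2} with hU
  have hUopen : IsOpen U := isOpen_lt (hs.comp continuous_subtype_val) continuous_const
  have hCU : Cc ⊆ U := fun y hy => by simp only [hU, mem_setOf_eq]; have : s y.1 ≤ 1/2 := hy; linarith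
  have hcl : ∀ y : ↥K, y ∈ Cc → ∃ V : Set ↥K, IsClopen V ∧ y ∈ V ∧ V ⊆ U := by
    intro y hy
    exact compact_exists_isClopen_in_isOpen hUopen (hCU hy)
  choose V hVclopen hyV hVU using hcl
  -- finite subcover
  have hcov : Cc ⊆ ⋃ (y : ↥Cc), V y.1 y.2 := by
    intro y hy; exact mem_iUnion.mpr ⟨⟨y, hy⟩, hyV y hy⟩
  obtain ⟨F, hF⟩ := hCcCompact.elim_finite_subcover (fun y : ↥Cc => V y.1 y.2)
    (fun y => (hVclopen y.1 y.2).2) hcov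
  set W : Set ↥K := ⋃ y ∈ F, V y.1 y.2 with hW
  have hWclopen : IsClopen W := isClopen_biUnion_finset (fun y _ => hVclopen y.1 y.2)
  have hWU : W ⊆ U := by
    intro z hz
    rcases mem_iUnion₂.mp hz with ⟨y, _, hzy⟩
    exact hVU y.1 y.2 hzy
  have hCW : Cc ⊆ W := hF
  -- the ±1-valued function on K
  set g0 : ↥K → ℝ := W.piecewise (fun _ => -1) (fun _ => 1) with hg0
  have hg0cont : Continuous g0 := by
    apply Continuous.piecewise _ continuous_const continuous_const
    intro a ha
    rw [hWclopen.frontier_eq] at ha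
    exact absurd ha (notMem_empty a)
  obtain ⟨g, hg⟩ := ContinuousMap.exists_restrict_eq (Y := ℝ) hKc.isClosed ⟨g0, hg0cont⟩
  have hgK : ∀ (x : Hc) (hx : x ∈ K), g x = g0 ⟨x, hx⟩ := by
    intro x hx
    have h2 := congrArg (fun f : C(↥K, ℝ) => f ⟨x, hx⟩) hg
    simpa [ContinuousMap.restrict_apply] using h2
  refine ⟨⟨fun x => max (-1) (min 1 (g x)), by fun_prop⟩, fun x => min_max_clamp_abs_le _, ?_⟩
  intro x hx
  simp only [ContinuousMap.coe_mk]
  by_cases hxW : (⟨x, hx⟩ : ↥K) ∈ W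
  · have hgx : g x = -1 := by rw [hgK x hx, hg0, Set.piecewise_eq_of_mem _ _ _ hxW]
    have hsx : s x < 1 / 2 + δ / 2 := hWU hxW
    rw [hgx]
    have : max (-1 : ℝ) (min 1 (-1)) = -1 := by norm_num
    rw [this]
    rw [le_abs]
    right; linarith
  · have hgx : g x = 1 := by rw [hgK x hx, hg0, Set.piecewise_eq_of_notMem _ _ _ hxW]
    have hsx : 1 / 2 < s x := by
      by_contra hcon
      exact hxW (hCW (by simpa [hCc] using le_of_not_gt hcon))
    rw [hgx]
    have : max (-1 : ℝ) (min 1 1) = 1 := by norm_num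
    rw [this]
    rw [le_abs]
    left; linarith

/-! ### A countable dense family in the unit ball of `C(Hc, ℝ)` -/

lemma exists_q : ∃ q : ℕ → C(Hc, ℝ), (∀ j x, |q j x| ≤ 1) ∧
    ∀ h : C(Hc, ℝ), (∀ x, |h x| ≤ 1) → ∃ j, ∀ x, |q j x - h x| ≤ 8⁻¹ := by
  obtain ⟨D, hDc, hDd⟩ := TopologicalSpace.exists_countable_dense C(Hc, ℝ)
  obtain ⟨e, he⟩ := hDc.exists_eq_range hDd.nonempty
  refine ⟨fun j => ⟨fun x => max (-1) (min 1 (e j x)), by fun_prop⟩,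
    fun j x => min_max_clamp_abs_le _, ?_⟩
  intro h hh
  obtain ⟨d, hdD, hdist⟩ := hDd.exists_dist_lt h (by norm_num : (0:ℝ) < 8⁻¹)
  rw [he] at hdD
  obtain ⟨j, rfl⟩ := hdD
  refine ⟨j, fun x => ?_⟩
  simp only [ContinuousMap.coe_mk]
  calc |max (-1) (min 1 (e j x)) - h x|
      = |max (-1) (min 1 (e j x)) - max (-1) (min 1 (h x))| := by rw [clamp_eq_self (hh x)]
    _ ≤ |e j x - h x| := clamp_lipschitz _ _
    _ = dist (e j x) (h x) := (Real.dist_eq _ _).symm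
    _ ≤ dist (e j) h := ContinuousMap.dist_apply_le_dist x
    _ ≤ 8⁻¹ := by rw [dist_comm] at hdist; exact le_of_lt hdist


lemma coeff_congr {q : ℕ → C(Hc, ℝ)} {t t' : ℝ} {k : ℕ}
    (hdg : dg t k = dg t' k) (hrun : run t k = run t' k) (x : Hc) :
    coeff q t k x = coeff q t' k x := by
  unfold coeff; rw [hdg, hrun]

lemma dg_eq_false_iff {t : ℝ} {k : ℕ} : dg t k = false ↔ ¬ (⌊t * 2 ^ (k+1)⌋ % 2 = 1) := by
  simp [dg]

lemma dg_eq_true_iff {t : ℝ} {k : ℕ} : dg t k = true ↔ ⌊t * 2 ^ (k+1)⌋ % 2 = 1 := by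
  simp [dg]

lemma two_le_pow_real (n : ℕ) (hn : 1 ≤ n) : (2:ℝ) ≤ 2 ^ n := by
  calc (2:ℝ) = 2 ^ 1 := (pow_one 2).symm
    _ ≤ 2 ^ n := by
        apply pow_le_pow_right₀ (by norm_num) hn

lemma good_interval {u : C(Hc, ℝ)} {q : ℕ → C(Hc, ℝ)} (hq : ∀ j x, |q j x| ≤ 1)
    (hqd : ∀ h : C(Hc, ℝ), (∀ x, |h x| ≤ 1) → ∃ j, ∀ x, |q j x - h x| ≤ 8⁻¹)
    {K : Set Hc} (hKc : IsCompact K) (hKt : IsTotallyDisconnected K)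
    {a b : ℝ} (hab : a < b) :
    ∃ a' b' : ℝ, a < a' ∧ a' < b' ∧ b' < b ∧
      ∀ t ∈ Ioo a' b', ∀ x ∈ K, Phi u q t x ≠ 1/2 := by
  have hba : (0:ℝ) < b - a := by linarith
  obtain ⟨Kl, hKl⟩ := pow_unbounded_of_one_lt (R := ℝ) (2 / (b - a)) one_lt_two
  have hpKl : (0:ℝ) < 2 ^ Kl := by positivity
  have hKl2 : 2 < (b - a) * 2 ^ Kl := by
    rw [div_lt_iff₀ hba] at hKl
    nlinarith
  set m : ℤ := ⌊a * 2 ^ Kl⌋ + 1 with hmdef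
  have ha1 : a < (m:ℝ) / 2 ^ Kl := by
    rw [lt_div_iff₀ hpKl]
    have := Int.lt_floor_add_one (a * 2 ^ Kl)
    push_cast [hmdef]
    linarith
  have hb1 : ((m:ℝ) + 1) / 2 ^ Kl < b := by
    rw [div_lt_iff₀ hpKl]
    have := Int.floor_le (a * 2 ^ Kl)
    push_cast [hmdef]
    nlinarith
  set cL : ℝ := (m:ℝ) / 2 ^ Kl with hcLdef
  have hcL2 : cL < ((m:ℝ) + 1) / 2 ^ Kl := by
    have hdiff : ((m:ℝ) + 1) / 2 ^ Kl - cL = 1 / 2 ^ Kl := by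
      rw [hcLdef]; ring
    have : (0:ℝ) < 1 / 2 ^ Kl := by positivity
    linarith
  -- the fixed part of the series
  set s : Hc → ℝ := fun y => u y + 8⁻¹ * ∑ k ∈ Finset.range (Kl + 1), coeff q cL k y
    with hsdef
  have hscont : Continuous s := by
    apply u.continuous.add
    exact continuous_const.mul
      (continuous_finset_sum _ fun k _ => continuous_coeff q cL k)
  set δ : ℝ := 8⁻¹ * ((2:ℝ)⁻¹) ^ (Kl + 1) with hδdef
  have hδpos : 0 < δ := by rw [hδdef]; positivity
  obtain ⟨h, hh1, hh2⟩ := perturb hKc hKt hscont hδpos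
  obtain ⟨j, hj⟩ := hqd h hh1
  set ℓ : ℕ := Nat.pair j 3 with hℓdef
  have hℓ3 : 3 ≤ ℓ := Nat.right_le_pair j 3
  have hunpair : (Nat.unpair ℓ).1 = j := by rw [hℓdef, Nat.unpair_pair]
  set L : ℕ := ℓ + 2 with hLdef
  set N : ℕ := Kl + ℓ + 2 with hNdef
  have hNL : N = Kl + L := by omega
  set m' : ℤ := m * 2 ^ L + (2 ^ (ℓ + 1) - 2) with hm'def
  have hpN : (0:ℝ) < 2 ^ N := by positivity
  have hpL : (0:ℝ) < 2 ^ L := by positivity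
  have h2pow : (2:ℝ) ≤ 2 ^ (ℓ + 1) := two_le_pow_real _ (by omega)
  have hpow2N : (2:ℝ) ^ N = 2 ^ Kl * 2 ^ L := by rw [hNL, pow_add]
  set a' : ℝ := (m' : ℝ) / 2 ^ N with ha'def
  set b' : ℝ := ((m' : ℝ) + 1) / 2 ^ N with hb'def
  have hm'cast : ((m' : ℤ) : ℝ) = (m : ℝ) * 2 ^ L + (2 ^ (ℓ + 1) - 2) := by
    rw [hm'def]; push_cast; ring
  have hcLa' : cL ≤ a' := by
    rw [ha'def, hcLdef]
    have hcl2 : (m:ℝ) / 2 ^ Kl = ((m:ℝ) * 2 ^ L) / 2 ^ N := by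
      rw [hpow2N, ← mul_div_mul_right ((m:ℝ)) (2 ^ Kl) (ne_of_gt hpL)]
    rw [hcl2]
    gcongr
    rw [hm'cast]
    linarith
  have hb'm1 : b' ≤ ((m:ℝ) + 1) / 2 ^ Kl := by
    rw [hb'def]
    have hcl2 : ((m:ℝ) + 1) / 2 ^ Kl = (((m:ℝ) + 1) * 2 ^ L) / 2 ^ N := by
      rw [hpow2N, ← mul_div_mul_right ((m:ℝ) + 1) (2 ^ Kl) (ne_of_gt hpL)]
    rw [hcl2]
    gcongr
    rw [hm'cast, hLdef]
    have hps : (2:ℝ) ^ (ℓ + 2) = 2 * 2 ^ (ℓ + 1) := by ring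
    rw [hps]
    nlinarith
  have ha'b' : a' < b' := by
    rw [ha'def, hb'def]
    have hdiff : ((m':ℝ) + 1) / 2 ^ N - (m':ℝ) / 2 ^ N = 1 / 2 ^ N := by ring
    have : (0:ℝ) < 1 / 2 ^ N := by positivity
    linarith
  have haa' : a < a' := lt_of_lt_of_le ha1 hcLa'
  have hb'b : b' < b := lt_of_le_of_lt hb'm1 hb1
  -- membership of `a'` and `cL` in the various dyadic intervals
  have ha'mem1 : (m':ℝ) / 2 ^ N ≤ a' := le_refl _
  have ha'mem2 : a' < ((m':ℝ) + 1) / 2 ^ N := ha'b'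
  have ha'Ico : (m:ℝ) / 2 ^ Kl ≤ a' ∧ a' < ((m:ℝ) + 1) / 2 ^ Kl :=
    ⟨hcLa', lt_of_lt_of_le ha'b' hb'm1⟩
  have hcLIco : (m:ℝ) / 2 ^ Kl ≤ cL ∧ cL < ((m:ℝ) + 1) / 2 ^ Kl := ⟨le_refl _, hcL2⟩
  -- floor values of `a'`
  have hfla : ∀ k, k + 1 ≤ N → ⌊a' * 2 ^ (k+1)⌋ = m' / 2 ^ (N - (k+1)) := by
    intro k hk
    exact floor_dyadic ha'mem1 ha'mem2 hk
  have hpint : ∀ e : ℕ, (0:ℤ) < 2 ^ e := fun e => by positivity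
  -- digit `Kl` of `a'` is 0
  have d0 : dg a' Kl = false := by
    have hfl := hfla Kl (by omega)
    rw [show N - (Kl + 1) = ℓ + 1 from by omega] at hfl
    have key : m' = (2 ^ (ℓ + 1) - 2) + (2 * m) * 2 ^ (ℓ + 1) := by
      rw [hm'def, hLdef]; ring
    have hdiv : m' / 2 ^ (ℓ + 1) = 2 * m := by
      rw [key, Int.add_mul_ediv_right _ _ (ne_of_gt (hpint (ℓ + 1))),
        Int.ediv_eq_zero_of_lt (by have := hpint (ℓ+1); omega)
          (by have := hpint (ℓ+1); omega)]
      ring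
    rw [dg_eq_false_iff, hfl, hdiv]
    omega
  -- digits `Kl+1+i`, `i < ℓ`, of `a'` are 1
  have d1 : ∀ i, i < ℓ → dg a' (Kl + 1 + i) = true := by
    intro i hi
    have hfl := hfla (Kl + 1 + i) (by omega)
    rw [show N - (Kl + 1 + i + 1) = ℓ - i from by omega] at hfl
    set e : ℕ := ℓ - i with hedef
    have he1 : 1 ≤ e := by omega
    have key : m' = (2 ^ e - 2) + ((2 ^ (i+1) - 1) + m * 2 ^ (i+2)) * 2 ^ e := by
      rw [hm'def, hLdef, show ℓ + 1 = (i + 1) + e from by omega,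
        show ℓ + 2 = (i + 2) + e from by omega, pow_add, pow_add]
      ring
    have h2e : (2:ℤ) ≤ 2 ^ e := by
      calc (2:ℤ) = 2 ^ 1 := (pow_one 2).symm
        _ ≤ 2 ^ e := pow_le_pow_right₀ (by norm_num) he1
    have hdiv : m' / 2 ^ e = (2 ^ (i+1) - 1) + m * 2 ^ (i+2) := by
      rw [key, Int.add_mul_ediv_right _ _ (ne_of_gt (hpint e)),
        Int.ediv_eq_zero_of_lt (by omega) (by omega)]
      ring
    rw [dg_eq_true_iff, hfl, hdiv]
    have hodd : (2 ^ (i+1) - 1) + m * 2 ^ (i+2) = 2 * (2 ^ i + m * 2 ^ (i+1)) - 1 := by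
      ring
    rw [hodd]
    omega
  -- digit `Kl+ℓ+1` of `a'` is 0
  have d2 : dg a' (Kl + ℓ + 1) = false := by
    have hfl := hfla (Kl + ℓ + 1) (by omega)
    rw [show N - (Kl + ℓ + 1 + 1) = 0 from by omega, pow_zero, Int.ediv_one] at hfl
    have key : m' = 2 * (m * 2 ^ (ℓ + 1) + 2 ^ ℓ - 1) := by
      rw [hm'def, hLdef]; ring
    rw [dg_eq_false_iff, hfl, key]
    omega
  -- run values of `a'`
  have hrun0 : run a' (Kl + 1) = 0 := by rw [run_succ, d0]; simp
  have hruni : ∀ i, i ≤ ℓ → run a' (Kl + 1 + i) = i := by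
    intro i
    induction i with
    | zero => intro _; simpa using hrun0
    | succ i ih =>
        intro hi
        rw [show Kl + 1 + (i + 1) = (Kl + 1 + i) + 1 from by omega, run_succ,
          d1 i (by omega), ih (by omega)]
        simp
  -- digit of `cL` at `Kl` is 0
  have dcL : dg cL Kl = false := by
    have hval : cL * 2 ^ (Kl + 1) = ((2 * m : ℤ) : ℝ) := by
      rw [hcLdef]
      push_cast
      field_simp
      ring
    rw [dg_eq_false_iff, hval, Int.floor_intCast]
    omega
  -- now the main estimate
  refine ⟨a', b', haa', ha'b', hb'b, ?_⟩
  rintro t ⟨ht1, ht2⟩ x hx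
  have ht1' : (m':ℝ) / 2 ^ N ≤ t := le_of_lt ht1
  have ht2' : t < ((m':ℝ) + 1) / 2 ^ N := ht2
  -- digits of t agree with those of a' below N
  have hdgta : ∀ k, k < N → dg t k = dg a' k := fun k hk =>
    dg_dyadic_eq ht1' ht2' ha'mem1 ha'mem2 hk
  have hrunta : ∀ k, k ≤ N → run t k = run a' k := fun k hk =>
    run_dyadic_eq ht1' ht2' ha'mem1 ha'mem2 hk
  have hdgaL : ∀ k, k < Kl → dg a' k = dg cL k := fun k hk =>
    dg_dyadic_eq ha'Ico.1 ha'Ico.2 hcLIco.1 hcLIco.2 hk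
  have hrunaL : ∀ k, k ≤ Kl → run a' k = run cL k := fun k hk =>
    run_dyadic_eq ha'Ico.1 ha'Ico.2 hcLIco.1 hcLIco.2 hk
  -- coefficients below Kl+1 agree with those of cL
  have hcfeq : ∀ k, k < Kl + 1 → coeff q t k x = coeff q cL k x := by
    intro k hk
    rcases Nat.lt_or_ge k Kl with hlt | hge
    · exact coeff_congr ((hdgta k (by omega)).trans (hdgaL k hlt))
        ((hrunta k (by omega)).trans (hrunaL k (by omega))) x
    · have hkK : k = Kl := by omega
      subst hkK
      refine coeff_congr ?_ ((hrunta k (by omega)).trans (hrunaL k (by omega))) x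
      rw [hdgta k (by omega), d0, dcL]
  have hsummable := summable_coeff hq t x
  have hdecomp := Summable.sum_add_tsum_nat_add (f := fun k => coeff q t k x) (Kl + ℓ + 2) hsummable
  -- the finite part
  have hrangesplit : ∑ i ∈ Finset.range (Kl + ℓ + 2), coeff q t i x
      = ∑ i ∈ Finset.range (Kl + 1), coeff q cL i x + ((2:ℝ)⁻¹) ^ (Kl + 1) * q j x := by
    rw [show Kl + ℓ + 2 = (Kl + 1) + (ℓ + 1) from by omega, Finset.sum_range_add]
    congr 1
    · exact Finset.sum_congr rfl fun k hk => hcfeq k (Finset.mem_range.mp hk)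
    · rw [Finset.sum_range_succ]
      have hz : ∀ i ∈ Finset.range ℓ, coeff q t (Kl + 1 + i) x = 0 := by
        intro i hi
        have hi' := Finset.mem_range.mp hi
        have hdg1 : dg t (Kl + 1 + i) = true :=
          (hdgta _ (by omega)).trans (d1 i hi')
        unfold coeff
        rw [hdg1]
        simp
      rw [Finset.sum_eq_zero hz, zero_add]
      have hdgterm : dg t (Kl + 1 + ℓ) = false := by
        rw [hdgta _ (by omega), show Kl + 1 + ℓ = Kl + ℓ + 1 from by omega, d2]
      have hrunterm : run t (Kl + 1 + ℓ) = ℓ :=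
        (hrunta _ (by omega)).trans (hruni ℓ le_rfl)
      unfold coeff
      rw [hdgterm, hrunterm, hunpair]
      simp only [Bool.false_eq_true, if_false]
      rw [show Kl + 1 + ℓ - ℓ = Kl + 1 from by omega]
  -- the tail
  have hruntail : run t (Kl + ℓ + 2) = 0 := by
    rw [show Kl + ℓ + 2 = (Kl + ℓ + 1) + 1 from rfl, run_succ,
      hdgta _ (by omega), d2]
    simp
  have htail : |∑' i, coeff q t (i + (Kl + ℓ + 2)) x| ≤ ((2:ℝ)⁻¹) ^ (Kl + 1) * 8⁻¹ := by
    have heqf : (fun i => coeff q t (i + (Kl + ℓ + 2)) x)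
        = fun i => coeff q t ((Kl + ℓ + 2) + i) x := by
      funext i; rw [Nat.add_comm]
    rw [heqf]
    have hb := abs_tsum_coeff_tail_le hq t x (Kl + ℓ + 2)
    rw [hruntail, Nat.sub_zero] at hb
    have hb2 : 2 * ((2:ℝ)⁻¹) ^ (Kl + ℓ + 2) = ((2:ℝ)⁻¹) ^ (Kl + 1) * ((2:ℝ)⁻¹) ^ ℓ := by
      rw [show Kl + ℓ + 2 = (Kl + 1) + (ℓ + 1) from by omega, pow_add]
      ring
    have hb3 : ((2:ℝ)⁻¹) ^ ℓ ≤ 8⁻¹ := by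
      calc ((2:ℝ)⁻¹) ^ ℓ ≤ ((2:ℝ)⁻¹) ^ 3 :=
            pow_le_pow_of_le_one (by norm_num) (by norm_num) hℓ3
        _ = 8⁻¹ := by norm_num
    calc |∑' i, coeff q t ((Kl + ℓ + 2) + i) x| ≤ 2 * ((2:ℝ)⁻¹) ^ (Kl + ℓ + 2) := hb
      _ = ((2:ℝ)⁻¹) ^ (Kl + 1) * ((2:ℝ)⁻¹) ^ ℓ := hb2
      _ ≤ ((2:ℝ)⁻¹) ^ (Kl + 1) * 8⁻¹ := by
          apply mul_le_mul_of_nonneg_left hb3 (by positivity)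
  -- put it together
  set T : ℝ := ∑' i, coeff q t (i + (Kl + ℓ + 2)) x with hTdef
  have hPhiT : Phi u q t x = s x + δ * q j x + 8⁻¹ * T := by
    unfold Phi
    rw [← hdecomp, hrangesplit, hsdef, hδdef]
    ring
  intro heq
  have h1 := hh2 x hx
  have h2 := hj x
  have heq' : s x + δ * q j x + 8⁻¹ * T = 1/2 := by rw [← hPhiT]; exact heq
  have hkey : s x + δ * h x - 1/2 = δ * (h x - q j x) - 8⁻¹ * T := by
    linear_combination heq'
  have habs : |s x + δ * h x - 1/2| ≤ δ * 8⁻¹ + 8⁻¹ * (((2:ℝ)⁻¹) ^ (Kl + 1) * 8⁻¹) := by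
    rw [hkey]
    have hA : |δ * (h x - q j x)| ≤ δ * 8⁻¹ := by
      rw [abs_mul, abs_of_pos hδpos]
      exact mul_le_mul_of_nonneg_left (by rw [abs_sub_comm]; exact h2) (le_of_lt hδpos)
    have hB : |8⁻¹ * T| ≤ 8⁻¹ * (((2:ℝ)⁻¹) ^ (Kl + 1) * 8⁻¹) := by
      rw [abs_mul, show |(8⁻¹:ℝ)| = 8⁻¹ by norm_num]
      exact mul_le_mul_of_nonneg_left htail (by norm_num)
    calc |δ * (h x - q j x) - 8⁻¹ * T|
        ≤ |δ * (h x - q j x)| + |8⁻¹ * T| := abs_sub _ _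
      _ ≤ δ * 8⁻¹ + 8⁻¹ * (((2:ℝ)⁻¹) ^ (Kl + 1) * 8⁻¹) := add_le_add hA hB
  have hδT : 8⁻¹ * (((2:ℝ)⁻¹) ^ (Kl + 1) * 8⁻¹) = δ * 8⁻¹ := by rw [hδdef]; ring
  rw [hδT] at habs
  linarith

lemma bad_meagre {u : C(Hc, ℝ)} {q : ℕ → C(Hc, ℝ)} (hq : ∀ j x, |q j x| ≤ 1)
    (hqd : ∀ h : C(Hc, ℝ), (∀ x, |h x| ≤ 1) → ∃ j, ∀ x, |q j x - h x| ≤ 8⁻¹)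
    {K : Set Hc} (hKc : IsCompact K) (hKt : IsTotallyDisconnected K) :
    IsMeagre {t : ℝ | ∃ x ∈ K, Phi u q t x = 1/2} := by
  set Bad := {t : ℝ | ∃ x ∈ K, Phi u q t x = 1/2} with hBad
  rw [IsMeagre]
  have hdense : Dense ((closure Bad)ᶜ) := by
    rw [dense_iff_inter_open]
    intro U hU hUne
    obtain ⟨x0, hx0⟩ := hUne
    obtain ⟨ε, hε, hball⟩ := Metric.isOpen_iff.mp hU x0 hx0
    have hio : Ioo (x0 - ε) (x0 + ε) ⊆ U := by rw [← Real.ball_eq_Ioo]; exact hball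
    obtain ⟨a', b', h1, h2, h3, hgood⟩ := good_interval hq hqd hKc hKt
      (show x0 - ε < x0 + ε by linarith)
    refine ⟨(a' + b') / 2, hio ⟨by linarith, by linarith⟩, ?_⟩
    intro hmem
    rw [mem_closure_iff] at hmem
    obtain ⟨y, hy1, hy2⟩ := hmem (Ioo a' b') isOpen_Ioo ⟨by linarith, by linarith⟩
    obtain ⟨x, hxK, hxeq⟩ := hy2
    exact hgood y hy1 x hxK hxeq
  apply Filter.mem_of_superset
    (residual_of_dense_open (isOpen_compl_iff.mpr isClosed_closure) hdense)
  exact compl_subset_compl.mpr subset_closure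

end Stmt13

/-- Assuming `cov(ℳ) = 𝔠`, the union of fewer than `𝔠` compact zero-dimensional subsets
of the Hilbert cube `[0,1]^ℕ` is zero-dimensional (its subspace topology has a base of
clopen sets). -/
theorem stmt_13
    (covM : ∀ S : Set (Set ℝ), (∀ s ∈ S, IsMeagre s) → #S < continuum →
      ⋃₀ S ≠ Set.univ)
    (𝒦 : Set (Set (ℕ → unitInterval))) (h𝒦card : #𝒦 < continuum)
    (h𝒦 : ∀ K ∈ 𝒦, IsCompact K ∧ IsTotallyDisconnected K) :
    ∃ B : Set (Set (⋃₀ 𝒦 : Set (ℕ → unitInterval))),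
      (∀ s ∈ B, IsClopen s) ∧ TopologicalSpace.IsTopologicalBasis B := by
  classical
  obtain ⟨q, hq, hqd⟩ := Stmt13.exists_q
  obtain ⟨ℬ, hℬc, hℬne, hℬ⟩ := TopologicalSpace.exists_countable_basis Stmt13.Hc
  set P : Set (Set Stmt13.Hc × Set Stmt13.Hc) :=
    {pq | pq.1 ∈ ℬ ∧ pq.2 ∈ ℬ ∧ closure pq.1 ⊆ pq.2} with hP
  have hPc : P.Countable := (hℬc.prod hℬc).mono (fun pq hpq => Set.mem_prod.mpr ⟨hpq.1, hpq.2.1⟩)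
  haveI : Countable ↥P := hPc.to_subtype
  have hury : ∀ i : ↥P, ∃ f : C(Stmt13.Hc, ℝ),
      Set.EqOn f 0 (closure i.1.1) ∧ Set.EqOn f 1 (i.1.2ᶜ) ∧
        ∀ x, f x ∈ Set.Icc (0:ℝ) 1 := by
    intro i
    apply exists_continuous_zero_one_of_isClosed isClosed_closure
      (hℬ.isOpen i.2.2.1).isClosed_compl
    rw [Set.disjoint_compl_right_iff_subset]
    exact i.2.2.2
  choose uF hu0 hu1 huI using hury
  set Bad : ↥𝒦 → ↥P → Set ℝ :=
    fun Kk i => {t | ∃ x ∈ (Kk : Set Stmt13.Hc), Stmt13.Phi (uF i) q t x = 1/2} with hBadDef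
  have hBadm : ∀ (Kk : ↥𝒦) (i : ↥P), IsMeagre (Bad Kk i) := fun Kk i =>
    Stmt13.bad_meagre hq hqd (h𝒦 Kk.1 Kk.2).1 (h𝒦 Kk.1 Kk.2).2
  set S : Set (Set ℝ) := Set.range (fun p : ↥𝒦 × ↥P => Bad p.1 p.2) with hS
  have hScard : #S < continuum := by
    calc #S ≤ #(↥𝒦 × ↥P) := Cardinal.mk_range_le
      _ = #↥𝒦 * #↥P := by rw [Cardinal.mk_prod, Cardinal.lift_id, Cardinal.lift_id]
      _ < continuum := Cardinal.mul_lt_of_lt Cardinal.aleph0_le_continuum h𝒦card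
          (lt_of_le_of_lt Cardinal.mk_le_aleph0 Cardinal.aleph0_lt_continuum)
  have hSne := covM S (fun s hs => by obtain ⟨p, rfl⟩ := hs; exact hBadm p.1 p.2) hScard
  have hex : ∃ t₀ : ℝ, t₀ ∉ ⋃₀ S := by
    by_contra hcon
    push_neg at hcon
    exact hSne (Set.eq_univ_of_forall hcon)
  obtain ⟨t₀, ht₀⟩ := hex
  have hgood : ∀ (i : ↥P) (x : Stmt13.Hc), x ∈ ⋃₀ 𝒦 →
      Stmt13.Phi (uF i) q t₀ x ≠ 1/2 := by
    intro i x hxU heq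
    obtain ⟨K, hK𝒦, hxK⟩ := hxU
    exact ht₀ ⟨Bad ⟨K, hK𝒦⟩ i, ⟨(⟨⟨K, hK𝒦⟩, i⟩ : ↥𝒦 × ↥P), rfl⟩, ⟨x, hxK, heq⟩⟩
  refine ⟨Set.range (fun i : ↥P =>
    {y : (⋃₀ 𝒦 : Set (ℕ → unitInterval)) | Stmt13.Phi (uF i) q t₀ y.1 < 1/2}), ?_, ?_⟩
  · rintro s ⟨i, rfl⟩
    dsimp only
    constructor
    · have hset : {y : (⋃₀ 𝒦 : Set (ℕ → unitInterval)) | Stmt13.Phi (uF i) q t₀ y.1 < 1/2}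
          = {y : (⋃₀ 𝒦 : Set (ℕ → unitInterval)) | Stmt13.Phi (uF i) q t₀ y.1 ≤ 1/2} := by
        ext y
        simp only [Set.mem_setOf_eq]
        exact ⟨le_of_lt, fun hle => lt_of_le_of_ne hle (hgood i y.1 y.2)⟩
      rw [hset]
      exact isClosed_le
        ((Stmt13.continuous_Phi (uF i) hq t₀).comp continuous_subtype_val) continuous_const
    · exact isOpen_lt
        ((Stmt13.continuous_Phi (uF i) hq t₀).comp continuous_subtype_val) continuous_const
  · apply TopologicalSpace.isTopologicalBasis_of_isOpen_of_nhds
    · rintro s ⟨i, rfl⟩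
      exact isOpen_lt
        ((Stmt13.continuous_Phi (uF i) hq t₀).comp continuous_subtype_val) continuous_const
    · intro y uSet hyu hu
      obtain ⟨O, hO, rfl⟩ := isOpen_induced_iff.mp hu
      have hyO : (y : Stmt13.Hc) ∈ O := hyu
      obtain ⟨t1, ht1n, ht1c, ht1s⟩ := exists_mem_nhds_isClosed_subset (hO.mem_nhds hyO)
      obtain ⟨q1, hq1B, hyq1, hq1sub⟩ := hℬ.exists_subset_of_mem_open
        (mem_interior_iff_mem_nhds.mpr ht1n) isOpen_interior
      have hclq1 : closure q1 ⊆ O :=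
        (closure_minimal (hq1sub.trans interior_subset) ht1c).trans ht1s
      obtain ⟨t2, ht2n, ht2c, ht2s⟩ :=
        exists_mem_nhds_isClosed_subset ((hℬ.isOpen hq1B).mem_nhds hyq1)
      obtain ⟨p1, hp1B, hyp1, hp1sub⟩ := hℬ.exists_subset_of_mem_open
        (mem_interior_iff_mem_nhds.mpr ht2n) isOpen_interior
      have hclp1 : closure p1 ⊆ q1 :=
        (closure_minimal (hp1sub.trans interior_subset) ht2c).trans ht2s
      have hiP : ((p1, q1) : Set Stmt13.Hc × Set Stmt13.Hc) ∈ P := ⟨hp1B, hq1B, hclp1⟩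
      set i : ↥P := ⟨(p1, q1), hiP⟩ with hidef
      refine ⟨{y : (⋃₀ 𝒦 : Set (ℕ → unitInterval)) | Stmt13.Phi (uF i) q t₀ y.1 < 1/2},
        ⟨i, rfl⟩, ?_, ?_⟩
      · have h0 : uF i y.1 = 0 := hu0 i (subset_closure hyp1)
        have := Stmt13.Phi_lt_half (u := uF i) hq t₀ h0
        simpa using this
      · intro z hz
        have hz' : Stmt13.Phi (uF i) q t₀ z.1 < 1/2 := hz
        have hzq1 : (z : Stmt13.Hc) ∈ q1 := by
          by_contra hzc
          have h1 : uF i z.1 = 1 := hu1 i hzc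
          have := Stmt13.Phi_gt_half (u := uF i) hq t₀ h1
          linarith
        show (z : Stmt13.Hc) ∈ O
        exact hclq1 (subset_closure hzq1)
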